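/- (One-step Lyapunov monotonicity.) Suppose W satisfies w_{ij} = 1 for all j ≥ i, U := W − euᵀ is symmetric for some u ∈ ℝ^m, β ≥ ρ > 0, α ≥ 1, P̂ := P − D_Hᵀ((W − euᵀ + αuuᵀ) ⊗ I)D_H − β D_Aᵀ((W − euᵀ + αuuᵀ) ⊗ I)D_A is positive semidefinite, the sequence {(x^k, λ^k)}_{k≥1} is generated by the algorithm, and (x*, λ*) satisfies the KKT conditions. Then for every k ≥ 1: (1/(2ρ))‖λ^{k+1} − λ*‖² + (1/2)(‖x^{k+1} − x*‖_P² − ‖y^{k+1} − y*‖_V² − β‖z^{k+1} − z*‖_V²) ≤ (1/(2ρ))‖λ^k − λ*‖² + (1/2)(‖x^k − x*‖_P² − ‖y^k − y*‖_V² − β‖z^k − z*‖_V²). -/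

import Mathlib

open Matrix Finset Filter Topology

/-- For a block matrix `M = (M_1,…,M_m)` and a block vector `x = (x_1,…,x_m)`,
`blkMulVec M x = Σ_i M_i x_i` (i.e. `Mx` for the concatenated matrix/vector). -/
noncomputable def blkMulVec {m r : ℕ} {n : Fin m → ℕ}
    (M : ∀ i : Fin m, Matrix (Fin r) (Fin (n i)) ℝ)
    (x : ∀ i : Fin m, Fin (n i) → ℝ) : Fin r → ℝ :=
  ∑ i, M i *ᵥ x i

/-- The objective `F(x) = (1/2) xᵀQx + Σ_i g_i(x_i)` where `Q = HᵀH`,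
so `F(x) = (1/2)‖Hx‖² + Σ_i g_i(x_i)`. -/
noncomputable def Fobj {m q : ℕ} {n : Fin m → ℕ}
    (H : ∀ i : Fin m, Matrix (Fin q) (Fin (n i)) ℝ)
    (g : ∀ i : Fin m, (Fin (n i) → ℝ) → ℝ)
    (x : ∀ i : Fin m, Fin (n i) → ℝ) : ℝ :=
  (1 / 2) * (blkMulVec H x ⬝ᵥ blkMulVec H x) + ∑ i, g i (x i)

/-- `‖x‖_P²` for the block-diagonal matrix `P = blkdiag(P_1,…,P_m)`:
`‖x‖_P² = Σ_i x_iᵀ P_i x_i`. -/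
noncomputable def normPSq {m : ℕ} {n : Fin m → ℕ}
    (P : ∀ i : Fin m, Matrix (Fin (n i)) (Fin (n i)) ℝ)
    (x : ∀ i : Fin m, Fin (n i) → ℝ) : ℝ :=
  ∑ i, x i ⬝ᵥ (P i *ᵥ x i)

/-- `‖y‖_V²` for a block vector `y = (y_1,…,y_m)`, where `V = U ⊗ I` with
`U := W − euᵀ` (so `U_{ij} = W_{ij} − u_j`): `‖y‖_V² = Σ_{i,j} U_{ij} ⟨y_i, y_j⟩`. -/
noncomputable def normVSq {m r : ℕ} (W : Matrix (Fin m) (Fin m) ℝ) (u : Fin m → ℝ)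
    (y : Fin m → Fin r → ℝ) : ℝ :=
  ∑ i, ∑ j, (W i j - u j) * (y i ⬝ᵥ y j)

/-- The quadratic form `v ↦ vᵀ D_Bᵀ (M ⊗ I) D_B v = Σ_{i,j} M_{ij} ⟨B_i v_i, B_j v_j⟩`
for a block-diagonal matrix `D_B = blkdiag(B_1,…,B_m)` and `M ∈ ℝ^{m×m}`. -/
noncomputable def quadKron {m r : ℕ} {n : Fin m → ℕ} (M : Matrix (Fin m) (Fin m) ℝ)
    (B : ∀ i : Fin m, Matrix (Fin r) (Fin (n i)) ℝ)
    (v : ∀ i : Fin m, Fin (n i) → ℝ) : ℝ :=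
  ∑ i, ∑ j, M i j * ((B i *ᵥ v i) ⬝ᵥ (B j *ᵥ v j))

/-- The point `x̂^{k,i}` with blocks `x̂_j^{k,i} = x_j^{k+1} − w_{ij}(x_j^{k+1} − x_j^k)`. -/
noncomputable def xhat {m : ℕ} {n : Fin m → ℕ} (W : Matrix (Fin m) (Fin m) ℝ)
    (xk xk1 : ∀ i : Fin m, Fin (n i) → ℝ) (i : Fin m) :
    ∀ j : Fin m, Fin (n j) → ℝ :=
  fun j => xk1 j - W i j • (xk1 j - xk j)

/-- One iteration of the hybrid Jacobian/Gauss-Seidel proximal BCU method: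
for each `i`, `x_i^{k+1}` minimizes
`⟨∇_i f(x̂^{k,i}) − A_iᵀ(λ^k − β(Ax̂^{k,i} − b)), x_i⟩ + g_i(x_i) + (1/2)‖x_i − x_i^k‖_{P_i}²`
(where `f(x) = (1/2)‖Hx‖²`, so `∇_i f(x̂) = H_iᵀ(Hx̂)`), and
`λ^{k+1} = λ^k − ρ(Ax^{k+1} − b)`. -/
noncomputable def Iter {m q p : ℕ} {n : Fin m → ℕ}
    (H : ∀ i : Fin m, Matrix (Fin q) (Fin (n i)) ℝ)
    (A : ∀ i : Fin m, Matrix (Fin p) (Fin (n i)) ℝ)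
    (b : Fin p → ℝ)
    (g : ∀ i : Fin m, (Fin (n i) → ℝ) → ℝ)
    (P : ∀ i : Fin m, Matrix (Fin (n i)) (Fin (n i)) ℝ)
    (W : Matrix (Fin m) (Fin m) ℝ)
    (β ρ : ℝ)
    (xk xk1 : ∀ i : Fin m, Fin (n i) → ℝ)
    (lamk lamk1 : Fin p → ℝ) : Prop :=
  (∀ i : Fin m, ∀ ξ : Fin (n i) → ℝ,
      ((H i)ᵀ *ᵥ blkMulVec H (xhat W xk xk1 i)
          - (A i)ᵀ *ᵥ (lamk - β • (blkMulVec A (xhat W xk xk1 i) - b))) ⬝ᵥ xk1 i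
        + g i (xk1 i)
        + (1 / 2) * ((xk1 i - xk i) ⬝ᵥ (P i *ᵥ (xk1 i - xk i)))
      ≤ ((H i)ᵀ *ᵥ blkMulVec H (xhat W xk xk1 i)
          - (A i)ᵀ *ᵥ (lamk - β • (blkMulVec A (xhat W xk xk1 i) - b))) ⬝ᵥ ξ
        + g i ξ
        + (1 / 2) * ((ξ - xk i) ⬝ᵥ (P i *ᵥ (ξ - xk i))))
  ∧ lamk1 = lamk - ρ • (blkMulVec A xk1 - b)

lemma sumDot {m r : ℕ} (f : Fin m → Fin r → ℝ) (v : Fin r → ℝ) :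
    (∑ i, f i) ⬝ᵥ v = ∑ i, f i ⬝ᵥ v := by
  simp [dotProduct, Finset.sum_apply, Finset.sum_mul]; rw [Finset.sum_comm]

lemma dotSum {m r : ℕ} (f : Fin m → Fin r → ℝ) (v : Fin r → ℝ) :
    v ⬝ᵥ (∑ i, f i) = ∑ i, v ⬝ᵥ f i := by
  simp [dotProduct, Finset.sum_apply, Finset.mul_sum]; rw [Finset.sum_comm]

lemma dps_nonneg {r : ℕ} (v : Fin r → ℝ) : 0 ≤ v ⬝ᵥ v :=
  Finset.sum_nonneg fun i _ => mul_self_nonneg _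

lemma tdot {r d : ℕ} (M : Matrix (Fin r) (Fin d) ℝ) (x : Fin r → ℝ) (y : Fin d → ℝ) :
    (Mᵀ *ᵥ x) ⬝ᵥ y = x ⬝ᵥ (M *ᵥ y) := by
  rw [dotProduct_mulVec x M y, mulVec_transpose]

lemma psym {d : ℕ} {P : Matrix (Fin d) (Fin d) ℝ} (hP : P.PosSemidef) (v w : Fin d → ℝ) :
    v ⬝ᵥ (P *ᵥ w) = w ⬝ᵥ (P *ᵥ v) := by
  conv_lhs => rw [dotProduct_mulVec, ← mulVec_transpose,
    ← conjTranspose_eq_transpose_of_trivial, hP.1]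
  exact dotProduct_comm _ _

lemma quadExpand {d : ℕ} {P : Matrix (Fin d) (Fin d) ℝ} (hP : P.PosSemidef)
    (v w : Fin d → ℝ) (s : ℝ) :
    (v + s • w) ⬝ᵥ (P *ᵥ (v + s • w))
      = v ⬝ᵥ (P *ᵥ v) + 2*s*(v ⬝ᵥ (P *ᵥ w)) + s^2*(w ⬝ᵥ (P *ᵥ w)) := by
  simp only [mulVec_add, mulVec_smul, dotProduct_add, add_dotProduct, dotProduct_smul,
    smul_dotProduct, smul_eq_mul]
  rw [psym hP w v]; ring

lemma strong_opt {d : ℕ} (c : Fin d → ℝ) (g : (Fin d → ℝ) → ℝ)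
    (hg : ConvexOn ℝ Set.univ g) (P : Matrix (Fin d) (Fin d) ℝ) (hP : P.PosSemidef)
    (x0 a : Fin d → ℝ)
    (hmin : ∀ ξ : Fin d → ℝ,
      c ⬝ᵥ a + g a + (1/2) * ((a - x0) ⬝ᵥ (P *ᵥ (a - x0)))
      ≤ c ⬝ᵥ ξ + g ξ + (1/2) * ((ξ - x0) ⬝ᵥ (P *ᵥ (ξ - x0))))
    (ξ : Fin d → ℝ) :
    c ⬝ᵥ a + g a + (1/2) * ((a - x0) ⬝ᵥ (P *ᵥ (a - x0)))
      + (1/2) * ((ξ - a) ⬝ᵥ (P *ᵥ (ξ - a)))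
    ≤ c ⬝ᵥ ξ + g ξ + (1/2) * ((ξ - x0) ⬝ᵥ (P *ᵥ (ξ - x0))) := by
  have key : ∀ t : ℝ, t ∈ Set.Ioo (0:ℝ) 1 →
      c ⬝ᵥ a + g a + (1/2) * ((a - x0) ⬝ᵥ (P *ᵥ (a - x0)))
        + (1-t) * (((ξ - a) ⬝ᵥ (P *ᵥ (ξ - a)))/2)
      ≤ c ⬝ᵥ ξ + g ξ + (1/2) * ((ξ - x0) ⬝ᵥ (P *ᵥ (ξ - x0))) := by
    rintro t ⟨ht0, ht1⟩
    have hmt := hmin ((1-t) • a + t • ξ)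
    have hgc := hg.2 (Set.mem_univ a) (Set.mem_univ ξ)
      (by linarith : (0:ℝ) ≤ 1 - t) (le_of_lt ht0) (by ring)
    have hv : (1-t) • a + t • ξ - x0 = (a - x0) + t • (ξ - a) := by
      funext j
      simp only [Pi.add_apply, Pi.sub_apply, Pi.smul_apply, smul_eq_mul]; ring
    have hw : ξ - x0 = (a - x0) + (1:ℝ) • (ξ - a) := by
      rw [one_smul]; abel
    have hcd : c ⬝ᵥ ((1-t) • a + t • ξ) = (1-t) * (c ⬝ᵥ a) + t * (c ⬝ᵥ ξ) := by
      simp [dotProduct_add, dotProduct_smul, smul_eq_mul]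
    rw [hv, quadExpand hP, hcd] at hmt
    have hqx : (ξ - x0) ⬝ᵥ (P *ᵥ (ξ - x0))
        = (a - x0) ⬝ᵥ (P *ᵥ (a - x0)) + 2*1*((a - x0) ⬝ᵥ (P *ᵥ (ξ - a)))
          + 1^2*((ξ - a) ⬝ᵥ (P *ᵥ (ξ - a))) := by
      rw [hw, quadExpand hP]
    simp only [smul_eq_mul] at hgc
    rw [hqx]
    have hscaled : t * (c ⬝ᵥ a + g a + (1/2) * ((a - x0) ⬝ᵥ (P *ᵥ (a - x0)))
        + (1-t) * (((ξ - a) ⬝ᵥ (P *ᵥ (ξ - a)))/2))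
        ≤ t * (c ⬝ᵥ ξ + g ξ + (1/2) * ((a - x0) ⬝ᵥ (P *ᵥ (a - x0))
            + 2*1*((a - x0) ⬝ᵥ (P *ᵥ (ξ - a))) + 1^2*((ξ - a) ⬝ᵥ (P *ᵥ (ξ - a))))) := by
      nlinarith [hmt, hgc]
    exact (mul_le_mul_iff_right₀ ht0).mp hscaled
  have hev : ∀ᶠ nn : ℕ in atTop,
      c ⬝ᵥ a + g a + (1/2) * ((a - x0) ⬝ᵥ (P *ᵥ (a - x0)))
        + (1 - 1/((nn:ℝ)+1)) * (((ξ - a) ⬝ᵥ (P *ᵥ (ξ - a)))/2)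
      ≤ c ⬝ᵥ ξ + g ξ + (1/2) * ((ξ - x0) ⬝ᵥ (P *ᵥ (ξ - x0))) := by
    filter_upwards [eventually_ge_atTop 1] with nn hnn
    apply key
    constructor
    · positivity
    · rw [div_lt_one (by positivity)]
      have : (1:ℝ) ≤ (nn:ℝ) := by exact_mod_cast hnn
      linarith
  have hlim : Tendsto (fun nn : ℕ =>
      c ⬝ᵥ a + g a + (1/2) * ((a - x0) ⬝ᵥ (P *ᵥ (a - x0)))
        + (1 - 1/((nn:ℝ)+1)) * (((ξ - a) ⬝ᵥ (P *ᵥ (ξ - a)))/2)) atTop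
      (𝓝 (c ⬝ᵥ a + g a + (1/2) * ((a - x0) ⬝ᵥ (P *ᵥ (a - x0)))
        + (1 - 0) * (((ξ - a) ⬝ᵥ (P *ᵥ (ξ - a)))/2))) := by
    exact tendsto_const_nhds.add
      (((tendsto_const_nhds.sub tendsto_one_div_add_atTop_nhds_zero_nat).mul_const _))
  have := le_of_tendsto hlim hev
  linarith [this]

lemma young {r : ℕ} (a b : Fin r → ℝ) : a ⬝ᵥ b ≤ (1/2)*(a ⬝ᵥ a) + (1/2)*(b ⬝ᵥ b) := by
  have h := dps_nonneg (a - b)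
  have h2 : (a - b) ⬝ᵥ (a - b) = a ⬝ᵥ a - a ⬝ᵥ b - (b ⬝ᵥ a - b ⬝ᵥ b) := by
    rw [sub_dotProduct, dotProduct_sub, dotProduct_sub]
  have h3 : b ⬝ᵥ a = a ⬝ᵥ b := dotProduct_comm _ _
  linarith

lemma half_dot {r : ℕ} (Y Ys : Fin r → ℝ) :
    (1/2)*(Y ⬝ᵥ Y) - (1/2)*(Ys ⬝ᵥ Ys) = Y ⬝ᵥ (Y - Ys) - (1/2)*((Y - Ys) ⬝ᵥ (Y - Ys)) := by
  have h1 : Y ⬝ᵥ (Y - Ys) = Y ⬝ᵥ Y - Y ⬝ᵥ Ys := dotProduct_sub _ _ _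
  have h2 : (Y - Ys) ⬝ᵥ (Y - Ys) = Y ⬝ᵥ Y - Y ⬝ᵥ Ys - (Ys ⬝ᵥ Y - Ys ⬝ᵥ Ys) := by
    rw [sub_dotProduct, dotProduct_sub, dotProduct_sub]
  have h3 : Ys ⬝ᵥ Y = Y ⬝ᵥ Ys := dotProduct_comm _ _
  linarith

lemma lam_expand {p : ℕ} (lk l1 ls rv : Fin p → ℝ) (ρ : ℝ) (h : l1 = lk - ρ • rv) :
    (l1 - ls) ⬝ᵥ (l1 - ls)
      = (lk - ls) ⬝ᵥ (lk - ls) - 2*ρ*((lk - ls) ⬝ᵥ rv) + ρ^2*(rv ⬝ᵥ rv) := by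
  subst h
  have e : lk - ρ • rv - ls = (lk - ls) - ρ • rv := by abel
  rw [e]
  simp only [sub_dotProduct, dotProduct_sub, smul_dotProduct, dotProduct_smul, smul_eq_mul]
  have c1 : ρ * (rv ⬝ᵥ lk) = ρ * (lk ⬝ᵥ rv) := by rw [dotProduct_comm]
  have c2 : ρ * (rv ⬝ᵥ ls) = ρ * (ls ⬝ᵥ rv) := by rw [dotProduct_comm]
  linarith

lemma bilinV {m r : ℕ} (W : Matrix (Fin m) (Fin m) ℝ) (u : Fin m → ℝ)
    (hU : ∀ i j, W i j - u j = W j i - u i) (a b : Fin m → Fin r → ℝ) :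
    ∑ i, ∑ j, (W i j - u j) * (a i ⬝ᵥ b j)
      = (1/2) * (normVSq W u a + normVSq W u b - normVSq W u (a - b)) := by
  have hsw : ∑ i, ∑ j, (W i j - u j) * (b i ⬝ᵥ a j)
      = ∑ i, ∑ j, (W i j - u j) * (a i ⬝ᵥ b j) := by
    rw [Finset.sum_comm]
    refine Finset.sum_congr rfl fun i _ => Finset.sum_congr rfl fun j _ => ?_
    rw [hU j i, dotProduct_comm (b j) (a i)]
  have hexp : normVSq W u (a - b) = normVSq W u a + normVSq W u b
      - (∑ i, ∑ j, (W i j - u j) * (a i ⬝ᵥ b j))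
      - (∑ i, ∑ j, (W i j - u j) * (b i ⬝ᵥ a j)) := by
    simp only [normVSq, ← Finset.sum_add_distrib, ← Finset.sum_sub_distrib]
    refine Finset.sum_congr rfl fun i _ => ?_
    refine Finset.sum_congr rfl fun j _ => ?_
    have e : (a - b) i ⬝ᵥ (a - b) j
        = a i ⬝ᵥ a j - a i ⬝ᵥ b j - (b i ⬝ᵥ a j - b i ⬝ᵥ b j) := by
      show (a i - b i) ⬝ᵥ (a j - b j) = _
      rw [sub_dotProduct, dotProduct_sub, dotProduct_sub]
    rw [e]; ring
  linarith

lemma dot_weighted {m r : ℕ} (c : Fin m → ℝ) (w : Fin m → Fin r → ℝ) :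
    (∑ i, c i • w i) ⬝ᵥ (∑ j, c j • w j) = ∑ i, ∑ j, (c i * c j) * (w i ⬝ᵥ w j) := by
  rw [sumDot]
  refine Finset.sum_congr rfl fun i _ => ?_
  rw [smul_dotProduct, dotSum, smul_eq_mul, Finset.mul_sum]
  refine Finset.sum_congr rfl fun j _ => ?_
  rw [dotProduct_smul, smul_eq_mul]; ring

lemma dot_weighted2 {m r : ℕ} (c : Fin m → ℝ) (w v : Fin m → Fin r → ℝ) :
    ∑ i, ∑ j, c j * (w j ⬝ᵥ v i) = (∑ j, c j • w j) ⬝ᵥ (∑ i, v i) := by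
  rw [sumDot, Finset.sum_comm]
  refine Finset.sum_congr rfl fun j _ => ?_
  rw [smul_dotProduct, dotSum, smul_eq_mul, Finset.mul_sum]

lemma SW_split {m r : ℕ} (W : Matrix (Fin m) (Fin m) ℝ) (u : Fin m → ℝ)
    (hU : ∀ i j, W i j - u j = W j i - u i) (p1 p0 ps : Fin m → Fin r → ℝ) :
    ∑ i, ∑ j, W i j * ((p1 j - p0 j) ⬝ᵥ (p1 i - ps i))
      = (1/2) * (normVSq W u (p1 - ps) + normVSq W u (p1 - p0) - normVSq W u (p0 - ps))
        + (∑ j, u j • (p1 j - p0 j)) ⬝ᵥ (∑ i, (p1 i - ps i)) := by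
  have hsplit : ∀ i j : Fin m, W i j * ((p1 j - p0 j) ⬝ᵥ (p1 i - ps i))
      = (W i j - u j) * ((p1 - ps) i ⬝ᵥ (p1 - p0) j)
        + u j * ((p1 j - p0 j) ⬝ᵥ (p1 i - ps i)) := by
    intro i j
    have e : (p1 - ps) i ⬝ᵥ (p1 - p0) j = (p1 j - p0 j) ⬝ᵥ (p1 i - ps i) := by
      show (p1 i - ps i) ⬝ᵥ (p1 j - p0 j) = _
      exact dotProduct_comm _ _
    rw [e]; ring
  simp only [hsplit, Finset.sum_add_distrib]
  have hb := bilinV W u hU (p1 - ps) (p1 - p0)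
  have hd : (p1 - ps) - (p1 - p0) = p0 - ps := by abel
  rw [hd] at hb
  rw [hb]
  have h2 := dot_weighted2 u (fun j => p1 j - p0 j) (fun i => p1 i - ps i)
  rw [h2]

lemma quadKron_split {m r : ℕ} {n : Fin m → ℕ} (W : Matrix (Fin m) (Fin m) ℝ)
    (u : Fin m → ℝ) (α : ℝ) (Mhat : Matrix (Fin m) (Fin m) ℝ)
    (hM : Mhat = fun i j => W i j - u j + α * (u i * u j))
    (B : ∀ i, Matrix (Fin r) (Fin (n i)) ℝ) (v : ∀ i, Fin (n i) → ℝ) :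
    quadKron Mhat B v = normVSq W u (fun i => B i *ᵥ v i)
      + α * ((∑ i, u i • (B i *ᵥ v i)) ⬝ᵥ (∑ j, u j • (B j *ᵥ v j))) := by
  subst hM
  rw [dot_weighted u (fun i => B i *ᵥ v i)]
  simp only [quadKron, normVSq, Finset.mul_sum, ← Finset.sum_add_distrib]
  refine Finset.sum_congr rfl fun i _ => ?_
  refine Finset.sum_congr rfl fun j _ => ?_
  ring

lemma final_combine (ρ β α L0 L1 t rr PX0 PX1 PD VY0 VY1 VYD VZ0 VZ1 VZD uyy uzz uys uzr sYY : ℝ)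
    (hρ : 0 < ρ) (hβρ : ρ ≤ β) (hα : 1 ≤ α)
    (hE : L1 = L0 - 2*ρ*t + ρ^2*rr)
    (hMAIN : -(1/2)*(VY1 + VYD - VY0) - uys - t + β*rr
        - β*((1/2)*(VZ1 + VZD - VZ0) + uzr)
        + (1/2)*PD - (1/2)*PX0 + (1/2)*PX1 ≤ -(1/2)*sYY)
    (hY1 : uys ≤ (1/2)*uyy + (1/2)*sYY)
    (hY2 : uzr ≤ (1/2)*uzz + (1/2)*rr)
    (huy : 0 ≤ uyy) (huz : 0 ≤ uzz) (hrr : 0 ≤ rr)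
    (hG : VYD + α*uyy + β*(VZD + α*uzz) ≤ PD) :
    L1 + ρ*(PX1 - VY1 - β*VZ1) ≤ L0 + ρ*(PX0 - VY0 - β*VZ0) := by
  have hρ0 : (0:ℝ) ≤ ρ := hρ.le
  have hβ0 : (0:ℝ) ≤ β := le_trans hρ0 hβρ
  have h1 : ρ * (VYD + α*uyy + β*(VZD + α*uzz)) ≤ ρ * PD := mul_le_mul_of_nonneg_left hG hρ0
  have h2 := mul_le_mul_of_nonneg_left hMAIN (by linarith : (0:ℝ) ≤ 2*ρ)
  have h3 := mul_le_mul_of_nonneg_left hY1 (by linarith : (0:ℝ) ≤ 2*ρ)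
  have h4 := mul_le_mul_of_nonneg_left hY2 (by positivity : (0:ℝ) ≤ 2*ρ*β)
  have h5 : 0 ≤ (ρ*(β - ρ)) * rr := mul_nonneg (mul_nonneg hρ0 (by linarith)) hrr
  have h6 : 0 ≤ (ρ*(α - 1)) * uyy := mul_nonneg (mul_nonneg hρ0 (by linarith)) huy
  have h7 : 0 ≤ (ρ*β*(α - 1)) * uzz :=
    mul_nonneg (mul_nonneg (mul_nonneg hρ0 hβ0) (by linarith)) huz
  nlinarith [h1, h2, h3, h4, h5, h6, h7, hE]

set_option maxHeartbeats 1000000 in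
/-- One-step Lyapunov monotonicity (inequality (25)): for every `k ≥ 1`,
`(1/(2ρ))‖λ^{k+1} − λ*‖² + (1/2)(‖x^{k+1} − x*‖_P² − ‖y^{k+1} − y*‖_V² − β‖z^{k+1} − z*‖_V²)
 ≤ (1/(2ρ))‖λ^k − λ*‖² + (1/2)(‖x^k − x*‖_P² − ‖y^k − y*‖_V² − β‖z^k − z*‖_V²)`. -/
theorem stmt_12 {m q p : ℕ} {n : Fin m → ℕ}
    (H : ∀ i : Fin m, Matrix (Fin q) (Fin (n i)) ℝ)
    (A : ∀ i : Fin m, Matrix (Fin p) (Fin (n i)) ℝ)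
    (b : Fin p → ℝ)
    (g : ∀ i : Fin m, (Fin (n i) → ℝ) → ℝ)
    (hg : ∀ i : Fin m, ConvexOn ℝ Set.univ (g i))
    (P : ∀ i : Fin m, Matrix (Fin (n i)) (Fin (n i)) ℝ)
    (hP : ∀ i : Fin m, (P i).PosSemidef)
    (W : Matrix (Fin m) (Fin m) ℝ) (u : Fin m → ℝ)
    (hW : ∀ i j : Fin m, i ≤ j → W i j = 1)              -- w_{ij} = 1 for j ≥ i
    (hU : ∀ i j : Fin m, W i j - u j = W j i - u i)       -- U := W − euᵀ symmetric
    (β ρ α : ℝ) (hρ : 0 < ρ) (hβρ : ρ ≤ β) (hα : 1 ≤ α)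
    (x : ℕ → ∀ i : Fin m, Fin (n i) → ℝ) (lam : ℕ → Fin p → ℝ)
    (hiter : ∀ k : ℕ, 1 ≤ k →
      Iter H A b g P W β ρ (x k) (x (k + 1)) (lam k) (lam (k + 1)))
    (Mhat : Matrix (Fin m) (Fin m) ℝ)
    (hM : Mhat = fun i j => W i j - u j + α * (u i * u j))
    -- P̂ := P − D_Hᵀ(M ⊗ I)D_H − β D_Aᵀ(M ⊗ I)D_A is positive semidefinite:
    (hPhat : ∀ v : ∀ i : Fin m, Fin (n i) → ℝ,
      0 ≤ normPSq P v - quadKron Mhat H v - β * quadKron Mhat A v)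
    -- (x*, λ*) satisfies the KKT conditions:
    (xstar : ∀ i : Fin m, Fin (n i) → ℝ) (lamstar : Fin p → ℝ)
    (hkkt1 : blkMulVec A xstar = b)
    (hkkt2 : ∀ xx : ∀ i : Fin m, Fin (n i) → ℝ,
      Fobj H g xstar + ∑ i, ((A i)ᵀ *ᵥ lamstar) ⬝ᵥ (xx i - xstar i) ≤ Fobj H g xx) :
    ∀ k : ℕ, 1 ≤ k →
      (1 / (2 * ρ)) * ((lam (k + 1) - lamstar) ⬝ᵥ (lam (k + 1) - lamstar))
        + (1 / 2) * (normPSq P (x (k + 1) - xstar)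
            - normVSq W u
                ((fun i => H i *ᵥ (x (k + 1)) i) - fun i => H i *ᵥ xstar i)
            - β * normVSq W u
                ((fun i => A i *ᵥ (x (k + 1)) i) - fun i => A i *ᵥ xstar i))
      ≤ (1 / (2 * ρ)) * ((lam k - lamstar) ⬝ᵥ (lam k - lamstar))
        + (1 / 2) * (normPSq P (x k - xstar)
            - normVSq W u ((fun i => H i *ᵥ (x k) i) - fun i => H i *ᵥ xstar i)
            - β * normVSq W u
                ((fun i => A i *ᵥ (x k) i) - fun i => A i *ᵥ xstar i)) := by
  intro k hk
  have hopt := (hiter k hk).1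
  have hlam := (hiter k hk).2
  have hAi := fun i => strong_opt _ (g i) (hg i) (P i) (hP i) (x k i) (x (k + 1) i)
    (hopt i) (xstar i)
  have hA2 : ∀ i : Fin m, ((H i)ᵀ *ᵥ blkMulVec H (xhat W (x k) (x (k + 1)) i) - (A i)ᵀ *ᵥ (lam k - β • (blkMulVec A (xhat W (x k) (x (k + 1)) i) - b))) ⬝ᵥ (x (k + 1) i - xstar i)
      + g i (x (k + 1) i) - g i (xstar i)
      + (1/2) * ((x (k + 1) i - x k i) ⬝ᵥ (P i *ᵥ (x (k + 1) i - x k i)))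
      - (1/2) * ((x k i - xstar i) ⬝ᵥ (P i *ᵥ (x k i - xstar i)))
      + (1/2) * ((x (k + 1) i - xstar i) ⬝ᵥ (P i *ᵥ (x (k + 1) i - xstar i))) ≤ 0 := by
    intro i
    have h := hAi i
    have e1 : ((H i)ᵀ *ᵥ blkMulVec H (xhat W (x k) (x (k + 1)) i) - (A i)ᵀ *ᵥ (lam k - β • (blkMulVec A (xhat W (x k) (x (k + 1)) i) - b))) ⬝ᵥ (x (k + 1) i - xstar i)
        = ((H i)ᵀ *ᵥ blkMulVec H (xhat W (x k) (x (k + 1)) i) - (A i)ᵀ *ᵥ (lam k - β • (blkMulVec A (xhat W (x k) (x (k + 1)) i) - b))) ⬝ᵥ (x (k + 1) i) - ((H i)ᵀ *ᵥ blkMulVec H (xhat W (x k) (x (k + 1)) i) - (A i)ᵀ *ᵥ (lam k - β • (blkMulVec A (xhat W (x k) (x (k + 1)) i) - b))) ⬝ᵥ (xstar i) := dotProduct_sub _ _ _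
    have e2 : (xstar i - x k i) ⬝ᵥ (P i *ᵥ (xstar i - x k i))
        = (x k i - xstar i) ⬝ᵥ (P i *ᵥ (x k i - xstar i)) := by
      rw [show xstar i - x k i = -(x k i - xstar i) from (neg_sub _ _).symm, mulVec_neg,
        dotProduct_neg, neg_dotProduct, neg_neg]
    have e3 : (xstar i - x (k + 1) i) ⬝ᵥ (P i *ᵥ (xstar i - x (k + 1) i))
        = (x (k + 1) i - xstar i) ⬝ᵥ (P i *ᵥ (x (k + 1) i - xstar i)) := by
      rw [show xstar i - x (k + 1) i = -(x (k + 1) i - xstar i) from (neg_sub _ _).symm,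
        mulVec_neg, dotProduct_neg, neg_dotProduct, neg_neg]
    linarith
  have hsum : ∑ i, (((H i)ᵀ *ᵥ blkMulVec H (xhat W (x k) (x (k + 1)) i) - (A i)ᵀ *ᵥ (lam k - β • (blkMulVec A (xhat W (x k) (x (k + 1)) i) - b))) ⬝ᵥ (x (k + 1) i - xstar i)
      + g i (x (k + 1) i) - g i (xstar i)
      + (1/2) * ((x (k + 1) i - x k i) ⬝ᵥ (P i *ᵥ (x (k + 1) i - x k i)))
      - (1/2) * ((x k i - xstar i) ⬝ᵥ (P i *ᵥ (x k i - xstar i)))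
      + (1/2) * ((x (k + 1) i - xstar i) ⬝ᵥ (P i *ᵥ (x (k + 1) i - xstar i)))) ≤ 0 := by
    have h := Finset.sum_le_sum (fun i (_ : i ∈ Finset.univ) => hA2 i)
    rw [Finset.sum_const_zero] at h
    exact h
  have hF2 : (∑ i, ((H i)ᵀ *ᵥ blkMulVec H (xhat W (x k) (x (k + 1)) i) - (A i)ᵀ *ᵥ (lam k - β • (blkMulVec A (xhat W (x k) (x (k + 1)) i) - b))) ⬝ᵥ (x (k + 1) i - xstar i))
      + (∑ i, g i (x (k + 1) i)) - (∑ i, g i (xstar i))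
      + (1/2) * normPSq P (x (k + 1) - x k) - (1/2) * normPSq P (x k - xstar) + (1/2) * normPSq P (x (k + 1) - xstar) ≤ 0 := by
    have h := hsum
    simp only [Finset.sum_add_distrib, Finset.sum_sub_distrib, ← Finset.mul_sum] at h
    have ePD : normPSq P (x (k + 1) - x k) = ∑ i, ((x (k + 1) i - x k i) ⬝ᵥ (P i *ᵥ (x (k + 1) i - x k i))) := rfl
    have ePX0 : normPSq P (x k - xstar) = ∑ i, ((x k i - xstar i) ⬝ᵥ (P i *ᵥ (x k i - xstar i))) := rfl
    have ePX1 : normPSq P (x (k + 1) - xstar) = ∑ i, ((x (k + 1) i - xstar i) ⬝ᵥ (P i *ᵥ (x (k + 1) i - xstar i))) := rfl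
    rw [ePD, ePX0, ePX1]
    linarith [h]
  have hkk := hkkt2 (x (k + 1))
  simp only [Fobj] at hkk
  have hAd : ∑ i, ((A i)ᵀ *ᵥ lamstar) ⬝ᵥ (x (k + 1) i - xstar i)
      = lamstar ⬝ᵥ (blkMulVec A (x (k + 1)) - b) := by
    have e : ∀ i : Fin m, ((A i)ᵀ *ᵥ lamstar) ⬝ᵥ (x (k + 1) i - xstar i)
        = lamstar ⬝ᵥ (A i *ᵥ x (k + 1) i - A i *ᵥ xstar i) := by
      intro i; rw [tdot, mulVec_sub]
    simp only [e]
    rw [← dotSum]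
    congr 1
    rw [Finset.sum_sub_distrib]
    show blkMulVec A (x (k + 1)) - blkMulVec A xstar = _
    rw [hkkt1]
  rw [hAd] at hkk
  have hB2 : (∑ i, g i (xstar i)) - (∑ i, g i (x (k + 1) i))
      ≤ (1/2) * (blkMulVec H (x (k + 1)) ⬝ᵥ blkMulVec H (x (k + 1))) - (1/2) * (blkMulVec H xstar ⬝ᵥ blkMulVec H xstar) - lamstar ⬝ᵥ (blkMulVec A (x (k + 1)) - b) := by
    linarith [hkk]
  have hhatH : ∀ i : Fin m, blkMulVec H (xhat W (x k) (x (k + 1)) i)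
      = blkMulVec H (x (k + 1)) - ∑ j, W i j • (H j *ᵥ x (k + 1) j - H j *ᵥ x k j) := by
    intro i
    simp only [blkMulVec, xhat]
    rw [← Finset.sum_sub_distrib]
    refine Finset.sum_congr rfl fun j _ => ?_
    rw [mulVec_sub, mulVec_smul, mulVec_sub]
  have hhatA : ∀ i : Fin m, blkMulVec A (xhat W (x k) (x (k + 1)) i)
      = blkMulVec A (x (k + 1)) - ∑ j, W i j • (A j *ᵥ x (k + 1) j - A j *ᵥ x k j) := by
    intro i
    simp only [blkMulVec, xhat]
    rw [← Finset.sum_sub_distrib]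
    refine Finset.sum_congr rfl fun j _ => ?_
    rw [mulVec_sub, mulVec_smul, mulVec_sub]
  have hCi : ∀ i : Fin m, ((H i)ᵀ *ᵥ blkMulVec H (xhat W (x k) (x (k + 1)) i) - (A i)ᵀ *ᵥ (lam k - β • (blkMulVec A (xhat W (x k) (x (k + 1)) i) - b))) ⬝ᵥ (x (k + 1) i - xstar i)
      = blkMulVec H (x (k + 1)) ⬝ᵥ (H i *ᵥ x (k + 1) i - H i *ᵥ xstar i)
        - (∑ j, W i j * ((H j *ᵥ x (k + 1) j - H j *ᵥ x k j) ⬝ᵥ (H i *ᵥ x (k + 1) i - H i *ᵥ xstar i)))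
        - lam k ⬝ᵥ (A i *ᵥ x (k + 1) i - A i *ᵥ xstar i)
        + β * ((blkMulVec A (x (k + 1)) - b) ⬝ᵥ (A i *ᵥ x (k + 1) i - A i *ᵥ xstar i))
        - β * (∑ j, W i j * ((A j *ᵥ x (k + 1) j - A j *ᵥ x k j) ⬝ᵥ (A i *ᵥ x (k + 1) i - A i *ᵥ xstar i))) := by
    intro i
    rw [sub_dotProduct, tdot, tdot, hhatH i, hhatA i]
    simp only [mulVec_sub, sub_dotProduct, dotProduct_sub, smul_dotProduct, dotProduct_smul,
      sumDot, dotSum, smul_eq_mul, mul_sub, Finset.mul_sum, Finset.sum_sub_distrib]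
    ring
  have hsum_y : (∑ i, (H i *ᵥ x (k + 1) i - H i *ᵥ xstar i))
      = blkMulVec H (x (k + 1)) - blkMulVec H xstar := by
    rw [Finset.sum_sub_distrib]; rfl
  have hsum_z : (∑ i, (A i *ᵥ x (k + 1) i - A i *ᵥ xstar i))
      = blkMulVec A (x (k + 1)) - b := by
    rw [Finset.sum_sub_distrib]
    show blkMulVec A (x (k + 1)) - blkMulVec A xstar = _
    rw [hkkt1]
  have hC : (∑ i, ((H i)ᵀ *ᵥ blkMulVec H (xhat W (x k) (x (k + 1)) i) - (A i)ᵀ *ᵥ (lam k - β • (blkMulVec A (xhat W (x k) (x (k + 1)) i) - b))) ⬝ᵥ (x (k + 1) i - xstar i))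
      = blkMulVec H (x (k + 1)) ⬝ᵥ (blkMulVec H (x (k + 1)) - blkMulVec H xstar)
        - (∑ i, ∑ j, W i j * ((H j *ᵥ x (k + 1) j - H j *ᵥ x k j) ⬝ᵥ (H i *ᵥ x (k + 1) i - H i *ᵥ xstar i))) - lam k ⬝ᵥ (blkMulVec A (x (k + 1)) - b)
        + β * ((blkMulVec A (x (k + 1)) - b) ⬝ᵥ (blkMulVec A (x (k + 1)) - b))
        - β * (∑ i, ∑ j, W i j * ((A j *ᵥ x (k + 1) j - A j *ᵥ x k j) ⬝ᵥ (A i *ᵥ x (k + 1) i - A i *ᵥ xstar i))) := by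
    have h0 : (∑ i, ((H i)ᵀ *ᵥ blkMulVec H (xhat W (x k) (x (k + 1)) i) - (A i)ᵀ *ᵥ (lam k - β • (blkMulVec A (xhat W (x k) (x (k + 1)) i) - b))) ⬝ᵥ (x (k + 1) i - xstar i))
        = ∑ i, (blkMulVec H (x (k + 1)) ⬝ᵥ (H i *ᵥ x (k + 1) i - H i *ᵥ xstar i)
        - (∑ j, W i j * ((H j *ᵥ x (k + 1) j - H j *ᵥ x k j) ⬝ᵥ (H i *ᵥ x (k + 1) i - H i *ᵥ xstar i)))
        - lam k ⬝ᵥ (A i *ᵥ x (k + 1) i - A i *ᵥ xstar i)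
        + β * ((blkMulVec A (x (k + 1)) - b) ⬝ᵥ (A i *ᵥ x (k + 1) i - A i *ᵥ xstar i))
        - β * (∑ j, W i j * ((A j *ᵥ x (k + 1) j - A j *ᵥ x k j) ⬝ᵥ (A i *ᵥ x (k + 1) i - A i *ᵥ xstar i)))) := Finset.sum_congr rfl fun i _ => hCi i
    rw [h0]
    simp only [Finset.sum_add_distrib, Finset.sum_sub_distrib, ← Finset.mul_sum]
    rw [← dotSum, ← dotSum, ← dotSum, hsum_y, hsum_z]
  have hsplitY : (∑ i, ∑ j, W i j * ((H j *ᵥ x (k + 1) j - H j *ᵥ x k j) ⬝ᵥ (H i *ᵥ x (k + 1) i - H i *ᵥ xstar i))) = (1/2) * (normVSq W u ((fun i => H i *ᵥ x (k + 1) i) - fun i => H i *ᵥ xstar i) + normVSq W u ((fun i => H i *ᵥ x (k + 1) i) - fun i => H i *ᵥ x k i) - normVSq W u ((fun i => H i *ᵥ x k i) - fun i => H i *ᵥ xstar i)) + (∑ j, u j • (H j *ᵥ x (k + 1) j - H j *ᵥ x k j)) ⬝ᵥ (blkMulVec H (x (k + 1)) - blkMulVec H xstar) := by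
    have h := SW_split W u hU (fun i => H i *ᵥ x (k + 1) i) (fun i => H i *ᵥ x k i)
      (fun i => H i *ᵥ xstar i)
    rw [hsum_y] at h
    exact h
  have hsplitZ : (∑ i, ∑ j, W i j * ((A j *ᵥ x (k + 1) j - A j *ᵥ x k j) ⬝ᵥ (A i *ᵥ x (k + 1) i - A i *ᵥ xstar i))) = (1/2) * (normVSq W u ((fun i => A i *ᵥ x (k + 1) i) - fun i => A i *ᵥ xstar i) + normVSq W u ((fun i => A i *ᵥ x (k + 1) i) - fun i => A i *ᵥ x k i) - normVSq W u ((fun i => A i *ᵥ x k i) - fun i => A i *ᵥ xstar i)) + (∑ j, u j • (A j *ᵥ x (k + 1) j - A j *ᵥ x k j)) ⬝ᵥ (blkMulVec A (x (k + 1)) - b) := by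
    have h := SW_split W u hU (fun i => A i *ᵥ x (k + 1) i) (fun i => A i *ᵥ x k i)
      (fun i => A i *ᵥ xstar i)
    rw [hsum_z] at h
    exact h
  have hsplitZb : β * (∑ i, ∑ j, W i j * ((A j *ᵥ x (k + 1) j - A j *ᵥ x k j) ⬝ᵥ (A i *ᵥ x (k + 1) i - A i *ᵥ xstar i))) = β * ((1/2) * (normVSq W u ((fun i => A i *ᵥ x (k + 1) i) - fun i => A i *ᵥ xstar i) + normVSq W u ((fun i => A i *ᵥ x (k + 1) i) - fun i => A i *ᵥ x k i) - normVSq W u ((fun i => A i *ᵥ x k i) - fun i => A i *ᵥ xstar i)) + (∑ j, u j • (A j *ᵥ x (k + 1) j - A j *ᵥ x k j)) ⬝ᵥ (blkMulVec A (x (k + 1)) - b)) := by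
    rw [hsplitZ]
  have hhalf := half_dot (blkMulVec H (x (k + 1))) (blkMulVec H xstar)
  have ht : (lam k - lamstar) ⬝ᵥ (blkMulVec A (x (k + 1)) - b) = lam k ⬝ᵥ (blkMulVec A (x (k + 1)) - b) - lamstar ⬝ᵥ (blkMulVec A (x (k + 1)) - b) := sub_dotProduct _ _ _
  have hMAIN : -(1/2)*(normVSq W u ((fun i => H i *ᵥ x (k + 1) i) - fun i => H i *ᵥ xstar i) + normVSq W u ((fun i => H i *ᵥ x (k + 1) i) - fun i => H i *ᵥ x k i) - normVSq W u ((fun i => H i *ᵥ x k i) - fun i => H i *ᵥ xstar i)) - (∑ j, u j • (H j *ᵥ x (k + 1) j - H j *ᵥ x k j)) ⬝ᵥ (blkMulVec H (x (k + 1)) - blkMulVec H xstar) - ((lam k - lamstar) ⬝ᵥ (blkMulVec A (x (k + 1)) - b)) + β*((blkMulVec A (x (k + 1)) - b) ⬝ᵥ (blkMulVec A (x (k + 1)) - b))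
      - β*((1/2)*(normVSq W u ((fun i => A i *ᵥ x (k + 1) i) - fun i => A i *ᵥ xstar i) + normVSq W u ((fun i => A i *ᵥ x (k + 1) i) - fun i => A i *ᵥ x k i) - normVSq W u ((fun i => A i *ᵥ x k i) - fun i => A i *ᵥ xstar i)) + (∑ j, u j • (A j *ᵥ x (k + 1) j - A j *ᵥ x k j)) ⬝ᵥ (blkMulVec A (x (k + 1)) - b))
      + (1/2)*normPSq P (x (k + 1) - x k) - (1/2)*normPSq P (x k - xstar) + (1/2)*normPSq P (x (k + 1) - xstar) ≤ -(1/2)*((blkMulVec H (x (k + 1)) - blkMulVec H xstar) ⬝ᵥ (blkMulVec H (x (k + 1)) - blkMulVec H xstar)) := by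
    linarith [hF2, hB2, hC, hsplitY, hsplitZb, hhalf, ht]
  have hY1 : (∑ j, u j • (H j *ᵥ x (k + 1) j - H j *ᵥ x k j)) ⬝ᵥ (blkMulVec H (x (k + 1)) - blkMulVec H xstar) ≤ (1/2)*((∑ j, u j • (H j *ᵥ x (k + 1) j - H j *ᵥ x k j)) ⬝ᵥ (∑ j, u j • (H j *ᵥ x (k + 1) j - H j *ᵥ x k j))) + (1/2)*((blkMulVec H (x (k + 1)) - blkMulVec H xstar) ⬝ᵥ (blkMulVec H (x (k + 1)) - blkMulVec H xstar)) := young _ _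
  have hY2 : (∑ j, u j • (A j *ᵥ x (k + 1) j - A j *ᵥ x k j)) ⬝ᵥ (blkMulVec A (x (k + 1)) - b) ≤ (1/2)*((∑ j, u j • (A j *ᵥ x (k + 1) j - A j *ᵥ x k j)) ⬝ᵥ (∑ j, u j • (A j *ᵥ x (k + 1) j - A j *ᵥ x k j))) + (1/2)*((blkMulVec A (x (k + 1)) - b) ⬝ᵥ (blkMulVec A (x (k + 1)) - b)) := young _ _
  have huy : 0 ≤ (∑ j, u j • (H j *ᵥ x (k + 1) j - H j *ᵥ x k j)) ⬝ᵥ (∑ j, u j • (H j *ᵥ x (k + 1) j - H j *ᵥ x k j)) := dps_nonneg _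
  have huz : 0 ≤ (∑ j, u j • (A j *ᵥ x (k + 1) j - A j *ᵥ x k j)) ⬝ᵥ (∑ j, u j • (A j *ᵥ x (k + 1) j - A j *ᵥ x k j)) := dps_nonneg _
  have hrr : 0 ≤ (blkMulVec A (x (k + 1)) - b) ⬝ᵥ (blkMulVec A (x (k + 1)) - b) := dps_nonneg _
  have hqkH := quadKron_split W u α Mhat hM H (x (k + 1) - x k)
  have e2H : ∀ i : Fin m, H i *ᵥ (x (k + 1) - x k) i = H i *ᵥ x (k + 1) i - H i *ᵥ x k i :=
    fun i => mulVec_sub _ _ _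
  simp only [e2H] at hqkH
  rw [show (fun i => H i *ᵥ x (k + 1) i - H i *ᵥ x k i)
      = ((fun i => H i *ᵥ x (k + 1) i) - fun i => H i *ᵥ x k i) from rfl] at hqkH
  have hqkA := quadKron_split W u α Mhat hM A (x (k + 1) - x k)
  have e2A : ∀ i : Fin m, A i *ᵥ (x (k + 1) - x k) i = A i *ᵥ x (k + 1) i - A i *ᵥ x k i :=
    fun i => mulVec_sub _ _ _
  simp only [e2A] at hqkA
  rw [show (fun i => A i *ᵥ x (k + 1) i - A i *ᵥ x k i)
      = ((fun i => A i *ᵥ x (k + 1) i) - fun i => A i *ᵥ x k i) from rfl] at hqkA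
  have hq2 : β * quadKron Mhat A (x (k + 1) - x k) = β * (normVSq W u ((fun i => A i *ᵥ x (k + 1) i) - fun i => A i *ᵥ x k i) + α * ((∑ j, u j • (A j *ᵥ x (k + 1) j - A j *ᵥ x k j)) ⬝ᵥ (∑ j, u j • (A j *ᵥ x (k + 1) j - A j *ᵥ x k j)))) := by
    rw [hqkA]
  have hp := hPhat (x (k + 1) - x k)
  have hG : normVSq W u ((fun i => H i *ᵥ x (k + 1) i) - fun i => H i *ᵥ x k i) + α*((∑ j, u j • (H j *ᵥ x (k + 1) j - H j *ᵥ x k j)) ⬝ᵥ (∑ j, u j • (H j *ᵥ x (k + 1) j - H j *ᵥ x k j))) + β*(normVSq W u ((fun i => A i *ᵥ x (k + 1) i) - fun i => A i *ᵥ x k i) + α*((∑ j, u j • (A j *ᵥ x (k + 1) j - A j *ᵥ x k j)) ⬝ᵥ (∑ j, u j • (A j *ᵥ x (k + 1) j - A j *ᵥ x k j)))) ≤ normPSq P (x (k + 1) - x k) := by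
    linarith [hp, hqkH, hq2]
  have hE := lam_expand (lam k) (lam (k + 1)) lamstar ((blkMulVec A (x (k + 1)) - b)) ρ hlam
  have key : ((lam (k + 1) - lamstar) ⬝ᵥ (lam (k + 1) - lamstar)) + ρ * (normPSq P (x (k + 1) - xstar) - normVSq W u ((fun i => H i *ᵥ x (k + 1) i) - fun i => H i *ᵥ xstar i) - β * normVSq W u ((fun i => A i *ᵥ x (k + 1) i) - fun i => A i *ᵥ xstar i))
      ≤ ((lam k - lamstar) ⬝ᵥ (lam k - lamstar)) + ρ * (normPSq P (x k - xstar) - normVSq W u ((fun i => H i *ᵥ x k i) - fun i => H i *ᵥ xstar i) - β * normVSq W u ((fun i => A i *ᵥ x k i) - fun i => A i *ᵥ xstar i)) :=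
    final_combine ρ β α ((lam k - lamstar) ⬝ᵥ (lam k - lamstar)) ((lam (k + 1) - lamstar) ⬝ᵥ (lam (k + 1) - lamstar)) ((lam k - lamstar) ⬝ᵥ (blkMulVec A (x (k + 1)) - b)) ((blkMulVec A (x (k + 1)) - b) ⬝ᵥ (blkMulVec A (x (k + 1)) - b)) (normPSq P (x k - xstar)) (normPSq P (x (k + 1) - xstar)) (normPSq P (x (k + 1) - x k)) (normVSq W u ((fun i => H i *ᵥ x k i) - fun i => H i *ᵥ xstar i)) (normVSq W u ((fun i => H i *ᵥ x (k + 1) i) - fun i => H i *ᵥ xstar i)) (normVSq W u ((fun i => H i *ᵥ x (k + 1) i) - fun i => H i *ᵥ x k i)) (normVSq W u ((fun i => A i *ᵥ x k i) - fun i => A i *ᵥ xstar i)) (normVSq W u ((fun i => A i *ᵥ x (k + 1) i) - fun i => A i *ᵥ xstar i)) (normVSq W u ((fun i => A i *ᵥ x (k + 1) i) - fun i => A i *ᵥ x k i)) ((∑ j, u j • (H j *ᵥ x (k + 1) j - H j *ᵥ x k j)) ⬝ᵥ (∑ j, u j • (H j *ᵥ x (k + 1) j - H j *ᵥ x k j)))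 ((∑ j, u j • (A j *ᵥ x (k + 1) j - A j *ᵥ x k j)) ⬝ᵥ (∑ j, u j • (A j *ᵥ x (k + 1) j - A j *ᵥ x k j))) ((∑ j, u j • (H j *ᵥ x (k + 1) j - H j *ᵥ x k j)) ⬝ᵥ (blkMulVec H (x (k + 1)) - blkMulVec H xstar)) ((∑ j, u j • (A j *ᵥ x (k + 1) j - A j *ᵥ x k j)) ⬝ᵥ (blkMulVec A (x (k + 1)) - b)) ((blkMulVec H (x (k + 1)) - blkMulVec H xstar) ⬝ᵥ (blkMulVec H (x (k + 1)) - blkMulVec H xstar))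
      hρ hβρ hα hE hMAIN hY1 hY2 huy huz hrr hG
  have hρne : ρ ≠ 0 := ne_of_gt hρ
  have h2ρ : (0:ℝ) < 2 * ρ := by linarith
  have e : ∀ L S : ℝ, (2*ρ) * (1 / (2 * ρ) * L + 1 / 2 * S) = L + ρ * S := by
    intro L S; field_simp
  have hbig : (2*ρ) * (1 / (2 * ρ) * ((lam (k + 1) - lamstar) ⬝ᵥ (lam (k + 1) - lamstar)) + 1 / 2 * (normPSq P (x (k + 1) - xstar) - normVSq W u ((fun i => H i *ᵥ x (k + 1) i) - fun i => H i *ᵥ xstar i) - β * normVSq W u ((fun i => A i *ᵥ x (k + 1) i) - fun i => A i *ᵥ xstar i)))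
      ≤ (2*ρ) * (1 / (2 * ρ) * ((lam k - lamstar) ⬝ᵥ (lam k - lamstar)) + 1 / 2 * (normPSq P (x k - xstar) - normVSq W u ((fun i => H i *ᵥ x k i) - fun i => H i *ᵥ xstar i) - β * normVSq W u ((fun i => A i *ᵥ x k i) - fun i => A i *ᵥ xstar i))) := by
    rw [e, e]; exact key
  exact le_of_mul_le_mul_left hbig h2ρ
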